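/- Let P be a finite p-group whose rank equals the rank of its center, i.e. rk(P) = rk(Z(P)). Then Ω₁(Z(P)) is the unique maximal (under inclusion) elementary abelian subgroup of P, and Ω₁(P) = Ω₁(Z(P)). -/

import Mathlib

/-- A subgroup is elementary abelian for the prime `p` if it is commutative and
every element has order dividing `p`. -/
def IsElementaryAbelian (p : ℕ) {G : Type*} [Group G] (H : Subgroup G) : Prop :=
  (∀ x ∈ H, ∀ y ∈ H, x * y = y * x) ∧ ∀ x ∈ H, x ^ p = 1

/-- `Ω₁(H)`: the subgroup generated by the elements of `H` of order dividing `p`. -/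
def Omega1 (p : ℕ) {G : Type*} [Group G] (H : Subgroup G) : Subgroup G :=
  Subgroup.closure {x : G | x ∈ H ∧ x ^ p = 1}

/-- The `p`-rank of a group: the largest `n` such that the group contains an
elementary abelian subgroup of order `p ^ n`. -/
noncomputable def pRank (p : ℕ) (G : Type*) [Group G] : ℕ :=
  sSup {n | ∃ E : Subgroup G, IsElementaryAbelian p E ∧ Nat.card E = p ^ n}

section Aux
open scoped Pointwise
set_option linter.unusedSectionVars false

variable (p : ℕ) (P : Type*) [Group P]

/-- The subgroup of central elements of order dividing `p`. -/
def OmegaZ : Subgroup P where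
  carrier := {x | x ∈ Subgroup.center P ∧ x ^ p = 1}
  one_mem' := ⟨Subgroup.one_mem _, one_pow p⟩
  mul_mem' := by
    rintro a b ⟨ha, ha1⟩ ⟨hb, hb1⟩
    refine ⟨mul_mem ha hb, ?_⟩
    have hc : Commute a b := (Subgroup.mem_center_iff.mp ha b).symm
    rw [hc.mul_pow, ha1, hb1, one_mul]
  inv_mem' := by
    rintro a ⟨ha, ha1⟩
    exact ⟨inv_mem ha, by rw [inv_pow, ha1, inv_one]⟩

lemma omega_center_eq : Omega1 p (Subgroup.center P) = OmegaZ p P := by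
  have h : {x : P | x ∈ Subgroup.center P ∧ x ^ p = 1} = (OmegaZ p P : Set P) := rfl
  rw [Omega1, h, Subgroup.closure_eq]

/-- The candidate set of ranks. -/
def RSet (G : Type*) [Group G] : Set ℕ :=
  {n | ∃ E : Subgroup G, IsElementaryAbelian p E ∧ Nat.card E = p ^ n}

lemma pRank_eq (G : Type*) [Group G] : pRank p G = sSup (RSet p G) := rfl

lemma RSet_nonempty (G : Type*) [Group G] : (RSet p G).Nonempty := by
  refine ⟨0, ⊥, ⟨?_, ?_⟩, by simp [Subgroup.card_bot]⟩
  · intro x hx y hy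
    rw [Subgroup.mem_bot] at hx hy; subst hx; subst hy; rfl
  · intro x hx
    rw [Subgroup.mem_bot] at hx; subst hx; exact one_pow p

variable [Fact p.Prime]

lemma RSet_bdd (G : Type*) [Group G] [Finite G] : BddAbove (RSet p G) := by
  refine ⟨Nat.card G, fun n hn => ?_⟩
  obtain ⟨E, _, hcard⟩ := hn
  have h1 : (p : ℕ) ^ n ≤ Nat.card G := hcard ▸ Subgroup.card_le_card_group E
  have h2 : n < p ^ n := Nat.lt_pow_self (Fact.out : p.Prime).one_lt
  omega

lemma mem_le_pRank {G : Type*} [Group G] [Finite G] {n : ℕ} (hn : n ∈ RSet p G) :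
    n ≤ pRank p G := le_csSup (RSet_bdd p G) hn

lemma elemAb_pgroup {G : Type*} [Group G] {E : Subgroup G} (hE : IsElementaryAbelian p E) :
    IsPGroup p E := by
  intro x
  refine ⟨1, ?_⟩
  have h := hE.2 (x : G) x.2
  rw [pow_one]
  exact Subtype.ext (by simpa using h)

lemma elemAb_card_pow {G : Type*} [Group G] [Finite G] {E : Subgroup G}
    (hE : IsElementaryAbelian p E) : ∃ n, Nat.card E = p ^ n :=
  IsPGroup.iff_card.mp (elemAb_pgroup p hE)

variable [Finite P]

lemma omegaZ_elemAb : IsElementaryAbelian p (OmegaZ p P) := by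
  constructor
  · intro x hx y _
    exact (Subgroup.mem_center_iff.mp hx.1 y).symm
  · intro x hx
    exact hx.2

/-- The order of `Ω₁(Z(P))` is `p ^ rk(Z(P))`, given `rk(P) = rk(Z(P))`. -/
lemma card_omegaZ (hrk : pRank p P = pRank p (Subgroup.center P)) :
    Nat.card (OmegaZ p P) = p ^ pRank p (Subgroup.center P) := by
  have hple : 1 ≤ p := (Fact.out : p.Prime).one_lt.le
  obtain ⟨k, hk⟩ := elemAb_card_pow p (omegaZ_elemAb p P)
  have hkmem : k ∈ RSet p P := ⟨OmegaZ p P, omegaZ_elemAb p P, hk⟩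
  have hkle : k ≤ pRank p (Subgroup.center P) := hrk ▸ mem_le_pRank p hkmem
  have hmem := Nat.sSup_mem (RSet_nonempty p (Subgroup.center P))
    (RSet_bdd p (Subgroup.center P))
  rw [← pRank_eq] at hmem
  obtain ⟨E, hE, hEcard⟩ := hmem
  have hmap : E.map (Subgroup.center P).subtype ≤ OmegaZ p P := by
    rintro y ⟨e, he, rfl⟩
    refine ⟨e.2, ?_⟩
    have h := hE.2 e he
    simpa using congrArg (Subgroup.center P).subtype h
  have hcardmap :
      Nat.card (E.map (Subgroup.center P).subtype) = p ^ pRank p (Subgroup.center P) := by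
    rw [← hEcard]
    exact (Nat.card_congr (Subgroup.equivMapOfInjective E _
      (Subgroup.center P).subtype_injective).toEquiv).symm
  have hlow : p ^ pRank p (Subgroup.center P) ≤ Nat.card (OmegaZ p P) :=
    hcardmap ▸ Subgroup.card_le_of_le hmap
  refine le_antisymm ?_ hlow
  rw [hk]
  exact Nat.pow_le_pow_right hple hkle

/-- Every element of order dividing `p` is in `Ω₁(Z(P))`. -/
lemma mem_omegaZ_of_pow (hrk : pRank p P = pRank p (Subgroup.center P))
    {x : P} (hx : x ^ p = 1) : x ∈ OmegaZ p P := by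
  by_contra hxn
  have hΩc : ∀ a ∈ OmegaZ p P, ∀ g : P, Commute a g :=
    fun a ha g => (Subgroup.mem_center_iff.mp ha.1 g).symm
  have hN : (OmegaZ p P).Normal := by
    refine ⟨fun a ha g => ?_⟩
    have h : g * a * g⁻¹ = a := by
      rw [(hΩc a ha g).eq.symm, mul_inv_cancel_right]
    rw [h]; exact ha
  set H := OmegaZ p P ⊔ Subgroup.zpowers x with hHdef
  have hmemH : ∀ y ∈ H, ∃ a ∈ OmegaZ p P, ∃ k : ℤ, a * x ^ k = y := by
    intro y hy
    have h : y ∈ ((OmegaZ p P : Set P) * (Subgroup.zpowers x : Set P)) := by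
      rw [← Subgroup.normal_mul]; exact hy
    obtain ⟨a, ha, b, hb, rfl⟩ := h
    obtain ⟨k, rfl⟩ := Subgroup.mem_zpowers_iff.mp hb
    exact ⟨a, ha, k, rfl⟩
  have hxkp : ∀ k : ℤ, (x ^ k) ^ p = 1 := by
    intro k
    rw [← zpow_natCast (x ^ k) p, ← zpow_mul, mul_comm, zpow_mul, zpow_natCast, hx, one_zpow]
  have hHE : IsElementaryAbelian p H := by
    constructor
    · intro y1 hy1 y2 hy2
      obtain ⟨a1, ha1, k, rfl⟩ := hmemH y1 hy1
      obtain ⟨a2, ha2, j, rfl⟩ := hmemH y2 hy2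
      have c1 : Commute (a1 * x ^ k) a2 := ((hΩc a2 ha2 _)).symm
      have c2 : Commute (a1 * x ^ k) (x ^ j) :=
        Commute.mul_left (hΩc a1 ha1 _) ((Commute.refl x).zpow_zpow k j)
      exact (c1.mul_right c2).eq
    · intro y hy
      obtain ⟨a, ha, k, rfl⟩ := hmemH y hy
      rw [(hΩc a ha (x ^ k)).mul_pow, ha.2, one_mul, hxkp]
  have hΩH : OmegaZ p P ≤ H := le_sup_left
  have hxH : x ∈ H := Subgroup.mem_sup_right (Subgroup.mem_zpowers x)
  have hne : OmegaZ p P ≠ H := fun h => hxn (h ▸ hxH)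
  have hlt : Nat.card (OmegaZ p P) < Nat.card H :=
    lt_of_le_of_ne (Subgroup.card_le_of_le hΩH)
      (fun h => hne (Subgroup.eq_of_le_of_card_ge hΩH (le_of_eq h.symm)))
  obtain ⟨n, hn⟩ := elemAb_card_pow p hHE
  have hnR : n ∈ RSet p P := ⟨H, hHE, hn⟩
  have hnle : n ≤ pRank p (Subgroup.center P) := hrk ▸ mem_le_pRank p hnR
  rw [card_omegaZ p P hrk, hn] at hlt
  have hlt2 : pRank p (Subgroup.center P) < n :=
    (Nat.pow_lt_pow_iff_right (Fact.out : p.Prime).one_lt).mp hlt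
  omega

end Aux

theorem stmt_1 {p : ℕ} [Fact p.Prime] {P : Type*} [Group P] [Finite P]
    (hP : IsPGroup p P)
    (hrk : pRank p P = pRank p (Subgroup.center P)) :
    (IsElementaryAbelian p (Omega1 p (Subgroup.center P)) ∧
      ∀ M : Subgroup P, IsElementaryAbelian p M →
        (∀ N : Subgroup P, IsElementaryAbelian p N → M ≤ N → N = M) →
        M = Omega1 p (Subgroup.center P)) ∧
    Omega1 p (⊤ : Subgroup P) = Omega1 p (Subgroup.center P) := by
  rw [omega_center_eq]
  refine ⟨⟨omegaZ_elemAb p P, ?_⟩, ?_⟩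
  · intro M hM hmax
    have hMΩ : M ≤ OmegaZ p P := fun m hm =>
      mem_omegaZ_of_pow p P hrk (hM.2 m hm)
    exact (hmax (OmegaZ p P) (omegaZ_elemAb p P) hMΩ).symm
  · refine le_antisymm ?_ ?_
    · rw [Omega1]
      rw [Subgroup.closure_le]
      intro y hy
      exact mem_omegaZ_of_pow p P hrk hy.2
    · rw [← omega_center_eq, Omega1, Omega1]
      exact Subgroup.closure_mono (fun y hy => ⟨Subgroup.mem_top y, hy.2⟩)
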